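/- The set of substructures of a quantum pre-Airy structure (A, B, C, ε) on V has a least element: there exists a substructure U₀ such that U₀ ⊆ U for every substructure U. (Hence every quantum pre-Airy structure contains a unique primitive substructure.) -/

import Mathlib

open TensorProduct

namespace Airy

variable {k V : Type*} [Field k] [AddCommGroup V] [Module k V]

section Slices


variable {M N M' N' : Type*} [AddCommGroup M] [AddCommGroup N] [AddCommGroup M']
  [AddCommGroup N'] [Module k M] [Module k N] [Module k M'] [Module k N']

/-- Left slice: `m ⊗ n ↦ f m • n`. -/
noncomputable def lslice (f : M →ₗ[k] k) : M ⊗[k] N →ₗ[k] N :=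
  TensorProduct.lift ((LinearMap.lsmul k N).comp f)

/-- Right slice: `m ⊗ n ↦ g n • m`. -/
noncomputable def rslice (g : N →ₗ[k] k) : M ⊗[k] N →ₗ[k] M :=
  TensorProduct.lift (((LinearMap.lsmul k M).comp g).flip)

@[simp] theorem lslice_tmul (f : M →ₗ[k] k) (m : M) (n : N) :
    lslice f (m ⊗ₜ[k] n) = f m • n := rfl

@[simp] theorem rslice_tmul (g : N →ₗ[k] k) (m : M) (n : N) :
    rslice g (m ⊗ₜ[k] n) = g n • m := rfl

theorem lslice_map (φ : M' →ₗ[k] M) (ψ : N' →ₗ[k] N) (f : M →ₗ[k] k) (y : M' ⊗[k] N') :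
    lslice f (TensorProduct.map φ ψ y) = ψ (lslice (f.comp φ) y) := by
  have : (lslice f).comp (TensorProduct.map φ ψ)
      = ψ.comp (lslice (f.comp φ) : M' ⊗[k] N' →ₗ[k] N') := by
    apply TensorProduct.ext'
    intro m n
    simp
  exact DFunLike.congr_fun this y

theorem rslice_map (φ : M' →ₗ[k] M) (ψ : N' →ₗ[k] N) (g : N →ₗ[k] k) (y : M' ⊗[k] N') :
    rslice g (TensorProduct.map φ ψ y) = φ (rslice (g.comp ψ) y) := by
  have : (rslice g).comp (TensorProduct.map φ ψ)
      = φ.comp (rslice (g.comp ψ) : M' ⊗[k] N' →ₗ[k] M') := by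
    apply TensorProduct.ext'
    intro m n
    simp
  exact DFunLike.congr_fun this y

theorem repr_right {ι : Type*} (b : Module.Basis ι k N) (x : M ⊗[k] N) :
    ∃ s : Finset ι, (∀ i ∉ s, rslice (b.coord i) x = 0) ∧
      x = ∑ i ∈ s, (rslice (b.coord i) x) ⊗ₜ[k] b i := by
  classical
  induction x using TensorProduct.induction_on with
  | zero => exact ⟨∅, by simp, by simp⟩
  | tmul m n =>
    refine ⟨(b.repr n).support, ?_, ?_⟩
    · intro i hi
      simp [Finsupp.notMem_support_iff.mp hi]
    · have hn : n = ∑ i ∈ (b.repr n).support, b.repr n i • b i := by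
        conv_lhs => rw [← b.linearCombination_repr n]
        rw [Finsupp.linearCombination_apply]
        rfl
      calc m ⊗ₜ[k] n = m ⊗ₜ[k] (∑ i ∈ (b.repr n).support, b.repr n i • b i) := by
            conv_lhs => rw [hn]
        _ = ∑ i ∈ (b.repr n).support, (b.repr n i • m) ⊗ₜ[k] b i := by
            rw [tmul_sum]
            exact Finset.sum_congr rfl fun i _ => (smul_tmul _ _ _).symm
        _ = ∑ i ∈ (b.repr n).support, (rslice (b.coord i) (m ⊗ₜ[k] n)) ⊗ₜ[k] b i :=
            Finset.sum_congr rfl fun i _ => by simp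
  | add x y hx hy =>
    obtain ⟨s, hs0, hs⟩ := hx
    obtain ⟨t, ht0, ht⟩ := hy
    refine ⟨s ∪ t, fun i hi => ?_, ?_⟩
    · rw [map_add, hs0 i (fun h => hi (Finset.mem_union_left _ h)),
        ht0 i (fun h => hi (Finset.mem_union_right _ h)), add_zero]
    · have e1 : x = ∑ i ∈ s ∪ t, (rslice (b.coord i) x) ⊗ₜ[k] b i :=
        hs.trans (Finset.sum_subset Finset.subset_union_left
          (fun i _ hi => by rw [hs0 i hi, zero_tmul]))
      have e2 : y = ∑ i ∈ s ∪ t, (rslice (b.coord i) y) ⊗ₜ[k] b i :=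
        ht.trans (Finset.sum_subset Finset.subset_union_right
          (fun i _ hi => by rw [ht0 i hi, zero_tmul]))
      calc x + y = (∑ i ∈ s ∪ t, (rslice (b.coord i) x) ⊗ₜ[k] b i)
            + ∑ i ∈ s ∪ t, (rslice (b.coord i) y) ⊗ₜ[k] b i := by rw [← e1, ← e2]
        _ = ∑ i ∈ s ∪ t, (rslice (b.coord i) (x + y)) ⊗ₜ[k] b i := by
            rw [← Finset.sum_add_distrib]
            exact Finset.sum_congr rfl fun i _ => by rw [map_add, add_tmul]

theorem repr_left {ι : Type*} (c : Module.Basis ι k M) (x : M ⊗[k] N) :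
    ∃ s : Finset ι, (∀ i ∉ s, lslice (c.coord i) x = 0) ∧
      x = ∑ i ∈ s, (c i) ⊗ₜ[k] (lslice (c.coord i) x) := by
  classical
  induction x using TensorProduct.induction_on with
  | zero => exact ⟨∅, by simp, by simp⟩
  | tmul m n =>
    refine ⟨(c.repr m).support, ?_, ?_⟩
    · intro i hi
      simp [Finsupp.notMem_support_iff.mp hi]
    · have hm : m = ∑ i ∈ (c.repr m).support, c.repr m i • c i := by
        conv_lhs => rw [← c.linearCombination_repr m]
        rw [Finsupp.linearCombination_apply]
        rfl
      calc m ⊗ₜ[k] n = (∑ i ∈ (c.repr m).support, c.repr m i • c i) ⊗ₜ[k] n := by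
            conv_lhs => rw [hm]
        _ = ∑ i ∈ (c.repr m).support, (c i) ⊗ₜ[k] (c.repr m i • n) := by
            rw [sum_tmul]
            exact Finset.sum_congr rfl fun i _ => smul_tmul _ _ _
        _ = ∑ i ∈ (c.repr m).support, (c i) ⊗ₜ[k] (lslice (c.coord i) (m ⊗ₜ[k] n)) :=
            Finset.sum_congr rfl fun i _ => by simp
  | add x y hx hy =>
    obtain ⟨s, hs0, hs⟩ := hx
    obtain ⟨t, ht0, ht⟩ := hy
    refine ⟨s ∪ t, fun i hi => ?_, ?_⟩
    · rw [map_add, hs0 i (fun h => hi (Finset.mem_union_left _ h)),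
        ht0 i (fun h => hi (Finset.mem_union_right _ h)), add_zero]
    · have e1 : x = ∑ i ∈ s ∪ t, (c i) ⊗ₜ[k] (lslice (c.coord i) x) :=
        hs.trans (Finset.sum_subset Finset.subset_union_left
          (fun i _ hi => by rw [hs0 i hi, tmul_zero]))
      have e2 : y = ∑ i ∈ s ∪ t, (c i) ⊗ₜ[k] (lslice (c.coord i) y) :=
        ht.trans (Finset.sum_subset Finset.subset_union_right
          (fun i _ hi => by rw [ht0 i hi, tmul_zero]))
      calc x + y = (∑ i ∈ s ∪ t, (c i) ⊗ₜ[k] (lslice (c.coord i) x))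
            + ∑ i ∈ s ∪ t, (c i) ⊗ₜ[k] (lslice (c.coord i) y) := by rw [← e1, ← e2]
        _ = ∑ i ∈ s ∪ t, (c i) ⊗ₜ[k] (lslice (c.coord i) (x + y)) := by
            rw [← Finset.sum_add_distrib]
            exact Finset.sum_congr rfl fun i _ => by rw [map_add, tmul_add]

theorem range_map_mono {P P' : Submodule k M} {Q Q' : Submodule k N} (hP : P ≤ P')
    (hQ : Q ≤ Q') :
    LinearMap.range (TensorProduct.map P.subtype Q.subtype)
      ≤ LinearMap.range (TensorProduct.map P'.subtype Q'.subtype) := by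
  have : TensorProduct.map P.subtype Q.subtype
      = (TensorProduct.map P'.subtype Q'.subtype).comp
        (TensorProduct.map (Submodule.inclusion hP) (Submodule.inclusion hQ)) := by
    apply TensorProduct.ext'
    intro m n
    rfl
  rw [this]
  exact LinearMap.range_comp_le_range _ _

/-- The minimal pair of subspaces supporting a tensor, over a field. -/
theorem exists_minimal_pair (x : M ⊗[k] N) :
    ∃ (P : Submodule k M) (Q : Submodule k N),
      x ∈ LinearMap.range (TensorProduct.map P.subtype Q.subtype) ∧
      ∀ (P' : Submodule k M) (Q' : Submodule k N),
        x ∈ LinearMap.range (TensorProduct.map P'.subtype Q'.subtype) → P ≤ P' ∧ Q ≤ Q' := by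
  set P : Submodule k M := Submodule.span k (Set.range fun g : N →ₗ[k] k => rslice g x) with hPdef
  set Q : Submodule k N := Submodule.span k (Set.range fun f : M →ₗ[k] k => lslice f x) with hQdef
  have hPmem : ∀ g : N →ₗ[k] k, rslice g x ∈ P := fun g => Submodule.subset_span ⟨g, rfl⟩
  have hQmem : ∀ f : M →ₗ[k] k, lslice f x ∈ Q := fun f => Submodule.subset_span ⟨f, rfl⟩
  refine ⟨P, Q, ?_, ?_⟩
  · -- x lies in P ⊗ Q
    set b := Module.Basis.ofVectorSpace k N with hb
    obtain ⟨s, -, hs⟩ := repr_right b x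
    set y : P ⊗[k] N := ∑ i ∈ s, (⟨rslice (b.coord i) x, hPmem _⟩ : P) ⊗ₜ[k] (b i : N) with hy
    have hxy : TensorProduct.map P.subtype LinearMap.id y = x := by
      rw [hy, map_sum]
      conv_rhs => rw [hs]
      exact Finset.sum_congr rfl fun i _ => rfl
    set c := Module.Basis.ofVectorSpace k P with hc
    obtain ⟨t, -, ht⟩ := repr_left c y
    have hq : ∀ j, lslice (c.coord j) y ∈ Q := by
      intro j
      obtain ⟨f, hf⟩ := LinearMap.exists_extend (c.coord j)
      have : lslice f x = lslice (c.coord j) y := by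
        rw [← hxy, lslice_map, hf]
        rfl
      rw [← this]
      exact hQmem f
    refine ⟨∑ j ∈ t, (c j) ⊗ₜ[k] (⟨lslice (c.coord j) y, hq j⟩ : Q), ?_⟩
    rw [map_sum, ← hxy]
    conv_rhs => rw [ht, map_sum]
    exact Finset.sum_congr rfl fun j _ => rfl
  · intro P' Q' hx
    obtain ⟨z, hz⟩ := hx
    constructor
    · rw [hPdef, Submodule.span_le]
      rintro _ ⟨g, rfl⟩
      show rslice g x ∈ (P' : Set M)
      rw [← hz, rslice_map]
      exact (rslice (g.comp Q'.subtype) z).2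
    · rw [hQdef, Submodule.span_le]
      rintro _ ⟨f, rfl⟩
      show lslice f x ∈ (Q' : Set N)
      rw [← hz, lslice_map]
      exact (lslice (f.comp P'.subtype) z).2

end Slices

/-- The canonical map `U ⊗ U → V ⊗ V` induced by the inclusion of a subspace `U ⊆ V`. -/
noncomputable def incl2 (U : Submodule k V) : (U ⊗[k] U) →ₗ[k] (V ⊗[k] V) :=
  TensorProduct.map U.subtype U.subtype

/-- The canonical map `U ⊗ U ⊗ U → V ⊗ V ⊗ V` induced by the inclusion of `U ⊆ V`. -/
noncomputable def incl3 (U : Submodule k V) :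
    (U ⊗[k] (U ⊗[k] U)) →ₗ[k] (V ⊗[k] (V ⊗[k] V)) :=
  TensorProduct.map U.subtype (incl2 U)

/-- `U` is a substructure of the quantum pre-Airy structure `(A, B, C, ε)`. -/
def IsSubstructure (A : V ⊗[k] (V ⊗[k] V)) (B : V →ₗ[k] (V ⊗[k] V))
    (C : (V ⊗[k] V) →ₗ[k] V) (ε : V) (U : Submodule k V) : Prop :=
  A ∈ LinearMap.range (incl3 U) ∧
  (∀ u ∈ U, B u ∈ LinearMap.range (incl2 U)) ∧
  (∀ w ∈ LinearMap.range (incl2 U), C w ∈ U) ∧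
  ε ∈ U

theorem range_incl3_eq (U : Submodule k V) :
    LinearMap.range (incl3 U)
      = LinearMap.range (TensorProduct.map U.subtype
          (LinearMap.range (incl2 U)).subtype) := by
  have heq : incl3 U = (TensorProduct.map U.subtype
      (LinearMap.range (incl2 U)).subtype).comp
      (LinearMap.lTensor _ (incl2 U).rangeRestrict) := by
    apply TensorProduct.ext'
    intro u w
    rfl
  rw [heq]
  exact LinearMap.range_comp_of_range_eq_top _
    (LinearMap.range_eq_top.mpr
      (LinearMap.lTensor_surjective _ (incl2 U).surjective_rangeRestrict))

theorem range_incl2_mono {U U' : Submodule k V} (h : U ≤ U') :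
    LinearMap.range (incl2 U) ≤ LinearMap.range (incl2 U') :=
  range_map_mono h h

theorem mem_range_incl2_sInf {x : V ⊗[k] V} (S : Set (Submodule k V))
    (h : ∀ U ∈ S, x ∈ LinearMap.range (incl2 U)) :
    x ∈ LinearMap.range (incl2 (sInf S)) := by
  obtain ⟨P, Q, hmem, hmin⟩ := exists_minimal_pair x
  have hP : P ≤ sInf S := le_sInf fun U hU => (hmin U U (h U hU)).1
  have hQ : Q ≤ sInf S := le_sInf fun U hU => (hmin U U (h U hU)).2
  exact range_map_mono hP hQ hmem

/-- the substructures of a quantum pre-Airy structure have a least element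
(the unique primitive substructure). -/
theorem exists_least_substructure (A : V ⊗[k] (V ⊗[k] V)) (B : V →ₗ[k] (V ⊗[k] V))
    (C : (V ⊗[k] V) →ₗ[k] V) (ε : V) :
    ∃ U₀ : Submodule k V, IsSubstructure A B C ε U₀ ∧
      ∀ U : Submodule k V, IsSubstructure A B C ε U → U₀ ≤ U := by
  set S : Set (Submodule k V) := {U | IsSubstructure A B C ε U} with hS
  refine ⟨sInf S, ⟨?_, ?_, ?_, ?_⟩, fun U hU => sInf_le hU⟩
  · have key : ∀ U ∈ S, A ∈ LinearMap.range (TensorProduct.map U.subtype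
        (LinearMap.range (incl2 U)).subtype) := by
      intro U hU
      rw [← range_incl3_eq]
      exact hU.1
    obtain ⟨P, Q, hmem, hmin⟩ := exists_minimal_pair A
    have hP : P ≤ sInf S := le_sInf fun U hU => (hmin U _ (key U hU)).1
    have hQ : Q ≤ LinearMap.range (incl2 (sInf S)) := by
      intro q hq
      exact mem_range_incl2_sInf S fun U hU => (hmin U _ (key U hU)).2 hq
    rw [range_incl3_eq]
    exact range_map_mono hP hQ hmem
  · intro u hu
    exact mem_range_incl2_sInf S fun U hU => hU.2.1 u (Submodule.mem_sInf.mp hu U hU)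
  · intro w hw
    exact Submodule.mem_sInf.mpr fun U hU =>
      hU.2.2.1 w (range_incl2_mono (sInf_le hU) hw)
  · exact Submodule.mem_sInf.mpr fun U hU => hU.2.2.2

end Airy
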